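/- Let 0 < λ < 1, χ ≥ 1, and suppose λ ≥ (b(K) + χ c(K)) / (χ b(K) + c(K)). Let κ_X^{KK} = (λ b(K) − c(K))/(1+λ) and κ_Y^{KK} = (b(K) − λ c(K))/(1+λ), and let κ_X, κ_Y ∈ ℝ satisfy κ_X ≤ χκ_Y ≤ κ_X + (χκ_Y^{KK} − κ_X^{KK}); set γ := χκ_Y − κ_X. Suppose p_0 ∈ [0,1] satisfies max{ (λ(b(K)+χc(K)) + (1+λ)γ)/((1−λ²)(χ b(K)+c(K))) − λ²/(1−λ²), 0 } ≤ p_0 ≤ min{ γ/((1−λ)(χ b(K)+c(K))), 1 }, and define p(y) := (λ(b(y)+χ c(y)) + (1+λ)γ)/(λ²(χ b(K)+c(K))) − ((1−λ²)/λ²) p_0 for y ∈ [0,K]. Then 0 ≤ p(y) ≤ 1 for all y ∈ [0,K], and the two-point memory-one strategy σ_X^0 = p_0 δ_K + (1−p_0) δ_0, σ_X[x,y] = p(y) δ_K + (1−p(y)) δ_0 satisfies, with ψ(s) := −χ b(s) − c(s), the identity (−c(x) − χ b(x) + γ) + λ(b(y) + χ c(y) + γ) = ψ(x) − λ² ∫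 ψ dσ_X[x,y] − (1−λ²) ∫ ψ dσ_X^0 for all x, y ∈ [0,K]. Consequently, in the strictly-alternating continuous Donation Game in which X moves first, this strategy unilaterally enforces π_X − κ_X = χ(π_Y − κ_Y). -/

import Mathlib

open MeasureTheory

/-- Integral of a continuous real function against a two-point combination of
Dirac measures. -/
lemma donation_two_point_integral {α : Type*} [MeasurableSpace α] [TopologicalSpace α]
    [OpensMeasurableSpace α] [T2Space α] [CompactSpace α] [SecondCountableTopology α]
    [MeasurableSingletonClass α]
    (f : α → ℝ) (hf : Continuous f) (a0 a1 : α) (r s : ENNReal) (hr : r ≠ ⊤) (hs : s ≠ ⊤) :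
    ∫ x, f x ∂(r • Measure.dirac a1 + s • Measure.dirac a0)
      = r.toReal * f a1 + s.toReal * f a0 := by
  have hint : ∀ a : α, Integrable f (Measure.dirac a) := fun a =>
    hf.integrable_of_hasCompactSupport
      (IsCompact.of_isClosed_subset isCompact_univ isClosed_closure (Set.subset_univ _))
  rw [integral_add_measure ((hint a1).smul_measure hr) ((hint a0).smul_measure hs),
    integral_smul_measure, integral_smul_measure, integral_dirac, integral_dirac]
  simp [smul_eq_mul]

set_option maxHeartbeats 4000000 in
theorem stmt_13
    (K : ℝ) (hK : 0 < K) (b c : ℝ → ℝ)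
    (hbC : ContinuousOn b (Set.Icc 0 K)) (hcC : ContinuousOn c (Set.Icc 0 K))
    (hbM : MonotoneOn b (Set.Icc 0 K)) (hcM : MonotoneOn c (Set.Icc 0 K))
    (hb0 : b 0 = 0) (hc0 : c 0 = 0)
    (hcb : ∀ s ∈ Set.Ioc (0 : ℝ) K, c s < b s)
    (hcpos : ∀ s ∈ Set.Ioc (0 : ℝ) K, 0 < c s)
    (lam : ℝ) (hlam0 : 0 < lam) (hlam1 : lam < 1)
    (χ : ℝ) (hχ : 1 ≤ χ)
    (hlamge : (b K + χ * c K) / (χ * b K + c K) ≤ lam)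
    (κX κY γ : ℝ) (hγ : γ = χ * κY - κX)
    (hκ1 : κX ≤ χ * κY)
    (hκ2 : χ * κY ≤ κX +
      (χ * ((b K - lam * c K) / (1 + lam)) - (lam * b K - c K) / (1 + lam)))
    (p0 : ℝ)
    (hp0lb : max ((lam * (b K + χ * c K) + (1 + lam) * γ) /
        ((1 - lam ^ 2) * (χ * b K + c K)) - lam ^ 2 / (1 - lam ^ 2)) 0 ≤ p0)
    (hp0ub : p0 ≤ min (γ / ((1 - lam) * (χ * b K + c K))) 1)
    (p : Set.Icc (0 : ℝ) K → ℝ)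
    (hp : ∀ y : Set.Icc (0 : ℝ) K,
      p y = (lam * (b ↑y + χ * c ↑y) + (1 + lam) * γ) /
          (lam ^ 2 * (χ * b K + c K)) - ((1 - lam ^ 2) / lam ^ 2) * p0)
    (σX0 : Measure (Set.Icc (0 : ℝ) K))
    (hσX0 : σX0 =
      ENNReal.ofReal p0 • Measure.dirac (⟨K, Set.right_mem_Icc.mpr hK.le⟩ : Set.Icc (0 : ℝ) K)
        + ENNReal.ofReal (1 - p0) • Measure.dirac (⟨0, Set.left_mem_Icc.mpr hK.le⟩ : Set.Icc (0 : ℝ) K))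
    (σX : Set.Icc (0 : ℝ) K × Set.Icc (0 : ℝ) K → Measure (Set.Icc (0 : ℝ) K))
    (hσX : ∀ q : Set.Icc (0 : ℝ) K × Set.Icc (0 : ℝ) K, σX q =
      ENNReal.ofReal (p q.2) • Measure.dirac (⟨K, Set.right_mem_Icc.mpr hK.le⟩ : Set.Icc (0 : ℝ) K)
        + ENNReal.ofReal (1 - p q.2) • Measure.dirac (⟨0, Set.left_mem_Icc.mpr hK.le⟩ : Set.Icc (0 : ℝ) K)) :
    (∀ y : Set.Icc (0 : ℝ) K, 0 ≤ p y ∧ p y ≤ 1) ∧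
    (∀ x y : Set.Icc (0 : ℝ) K,
      (-(c ↑x) - χ * b ↑x + γ) + lam * (b ↑y + χ * c ↑y + γ) =
        (-(χ * b ↑x) - c ↑x)
          - lam ^ 2 * (∫ s, (-(χ * b ↑s) - c ↑s) ∂(σX (x, y)))
          - (1 - lam ^ 2) * (∫ s, (-(χ * b ↑s) - c ↑s) ∂σX0)) ∧
    (∀ ν : ℕ → Measure (Set.Icc (0 : ℝ) K × Set.Icc (0 : ℝ) K),
      (∀ t, IsProbabilityMeasure (ν t)) →
      (∀ E : Set (Set.Icc (0 : ℝ) K), MeasurableSet E →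
        ν 0 (E ×ˢ Set.univ) = σX0 E) →
      (∀ (t : ℕ) (E : Set (Set.Icc (0 : ℝ) K)), MeasurableSet E →
        ν (t + 1) (E ×ˢ Set.univ) = ∫⁻ q, σX q E ∂(ν t)) →
      ((1 - lam) * ∑' t : ℕ, lam ^ (2 * t) *
          ∫ q, (-(c ↑q.1) + lam * b ↑q.2) ∂(ν t)) - κX =
        χ * (((1 - lam) * ∑' t : ℕ, lam ^ (2 * t) *
          ∫ q, (b ↑q.1 + lam * (-(c ↑q.2))) ∂(ν t)) - κY)) := by
  -- basic positivity facts
  have hKmem : K ∈ Set.Ioc (0 : ℝ) K := ⟨hK, le_refl K⟩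
  have hcK : 0 < c K := hcpos K hKmem
  have hbKcK : c K < b K := hcb K hKmem
  have hbK : 0 < b K := lt_trans hcK hbKcK
  have hB : 0 < χ * b K + c K := by nlinarith
  have hBne : χ * b K + c K ≠ 0 := ne_of_gt hB
  have hlam2 : (0 : ℝ) < lam ^ 2 := by positivity
  have hlamne : lam ≠ 0 := ne_of_gt hlam0
  have h1l : (0 : ℝ) < 1 - lam := by linarith
  have h1l2 : (0 : ℝ) < 1 - lam ^ 2 := by nlinarith
  have hγ0 : 0 ≤ γ := by rw [hγ]; linarith
  have h0mem : (0 : ℝ) ∈ Set.Icc (0 : ℝ) K := Set.left_mem_Icc.mpr hK.le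
  have hKmem' : K ∈ Set.Icc (0 : ℝ) K := Set.right_mem_Icc.mpr hK.le
  have hbnd : ∀ y : Set.Icc (0 : ℝ) K,
      0 ≤ b ↑y ∧ b ↑y ≤ b K ∧ 0 ≤ c ↑y ∧ c ↑y ≤ c K := by
    intro y
    have h1 := hbM h0mem y.2 y.2.1
    have h2 := hbM y.2 hKmem' y.2.2
    have h3 := hcM h0mem y.2 y.2.1
    have h4 := hcM y.2 hKmem' y.2.2
    rw [hb0] at h1; rw [hc0] at h3
    exact ⟨h1, h2, h3, h4⟩
  -- p0 bounds
  have hp0nn : 0 ≤ p0 := le_trans (le_max_right _ _) hp0lb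
  have hp0le1 : p0 ≤ 1 := le_trans hp0ub (min_le_right _ _)
  have hp0a : lam * (b K + χ * c K) + (1 + lam) * γ ≤
      (1 - lam ^ 2) * p0 * (χ * b K + c K) + lam ^ 2 * (χ * b K + c K) := by
    have h1 := le_trans (le_max_left _ _) hp0lb
    have h1' : (lam * (b K + χ * c K) + (1 + lam) * γ) /
        ((1 - lam ^ 2) * (χ * b K + c K)) ≤ p0 + lam ^ 2 / (1 - lam ^ 2) := by linarith
    have h2 := (div_le_iff₀ (mul_pos h1l2 hB)).mp h1'
    have h3 : (p0 + lam ^ 2 / (1 - lam ^ 2)) * ((1 - lam ^ 2) * (χ * b K + c K)) =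
        (1 - lam ^ 2) * p0 * (χ * b K + c K) + lam ^ 2 * (χ * b K + c K) := by
      field_simp
    linarith [h3 ▸ h2]
  have hp0b : p0 * ((1 - lam) * (χ * b K + c K)) ≤ γ := by
    have h1 := le_trans hp0ub (min_le_left _ _)
    exact (le_div_iff₀ (mul_pos h1l hB)).mp h1
  -- closed form for p with a single denominator
  have hpy : ∀ y : Set.Icc (0 : ℝ) K, p y =
      (lam * (b ↑y + χ * c ↑y) + (1 + lam) * γ - (1 - lam ^ 2) * p0 * (χ * b K + c K)) /
        (lam ^ 2 * (χ * b K + c K)) := by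
    intro y; rw [hp y]; field_simp
  -- Part 1
  have part1 : ∀ y : Set.Icc (0 : ℝ) K, 0 ≤ p y ∧ p y ≤ 1 := by
    intro y
    obtain ⟨h1, h2, h3, h4⟩ := hbnd y
    constructor
    · rw [hpy y]
      apply div_nonneg _ (by positivity)
      nlinarith [hp0b, mul_nonneg hlam0.le h1, mul_nonneg hlam0.le (mul_nonneg (by linarith : (0:ℝ) ≤ χ) h3)]
    · rw [hpy y, div_le_one (by positivity)]
      have hstep : lam * (b ↑y + χ * c ↑y) ≤ lam * (b K + χ * c K) := by
        have := mul_le_mul_of_nonneg_left h4 (by linarith : (0:ℝ) ≤ χ)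
        nlinarith
      linarith [hp0a]
  -- continuity of the relevant functions on the subtype
  have hb' : Continuous (fun s : Set.Icc (0 : ℝ) K => b ↑s) := hbC.restrict
  have hc' : Continuous (fun s : Set.Icc (0 : ℝ) K => c ↑s) := hcC.restrict
  have hψc : Continuous (fun s : Set.Icc (0 : ℝ) K => -(χ * b ↑s) - c ↑s) :=
    ((continuous_const.mul hb').neg).sub hc'
  -- integrals against the two-point measures
  have hJσ : ∀ q : Set.Icc (0 : ℝ) K × Set.Icc (0 : ℝ) K,
      (∫ s, (-(χ * b ↑s) - c ↑s) ∂(σX q)) = p q.2 * (-(χ * b K) - c K) := by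
    intro q
    rw [hσX q, donation_two_point_integral _ hψc _ _ _ _ ENNReal.ofReal_ne_top
      ENNReal.ofReal_ne_top, ENNReal.toReal_ofReal (part1 q.2).1,
      ENNReal.toReal_ofReal (by linarith [(part1 q.2).2] : (0:ℝ) ≤ 1 - p q.2)]
    show p q.2 * (-(χ * b K) - c K) + (1 - p q.2) * (-(χ * b 0) - c 0) = _
    rw [hb0, hc0]; ring
  have hJ0 : (∫ s, (-(χ * b ↑s) - c ↑s) ∂σX0) = p0 * (-(χ * b K) - c K) := by
    rw [hσX0, donation_two_point_integral _ hψc _ _ _ _ ENNReal.ofReal_ne_top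
      ENNReal.ofReal_ne_top, ENNReal.toReal_ofReal hp0nn,
      ENNReal.toReal_ofReal (by linarith : (0:ℝ) ≤ 1 - p0)]
    show p0 * (-(χ * b K) - c K) + (1 - p0) * (-(χ * b 0) - c 0) = _
    rw [hb0, hc0]; ring
  -- Part 2
  have part2 : ∀ x y : Set.Icc (0 : ℝ) K,
      (-(c ↑x) - χ * b ↑x + γ) + lam * (b ↑y + χ * c ↑y + γ) =
        (-(χ * b ↑x) - c ↑x)
          - lam ^ 2 * (∫ s, (-(χ * b ↑s) - c ↑s) ∂(σX (x, y)))
          - (1 - lam ^ 2) * (∫ s, (-(χ * b ↑s) - c ↑s) ∂σX0) := by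
    intro x y
    rw [hJσ (x, y), hJ0]
    show _ = _ - lam ^ 2 * (p y * _) - _
    rw [hpy y]
    field_simp
    ring
  refine ⟨part1, part2, ?_⟩
  -- Part 3
  intro ν hprob hν0 hνsucc
  have hpcont : Continuous p := by
    have hpfun : p = fun y : Set.Icc (0 : ℝ) K =>
        (lam * (b ↑y + χ * c ↑y) + (1 + lam) * γ) /
          (lam ^ 2 * (χ * b K + c K)) - ((1 - lam ^ 2) / lam ^ 2) * p0 := funext hp
    rw [hpfun]
    exact (((continuous_const.mul (hb'.add (continuous_const.mul hc'))).add
      continuous_const).div_const _).sub continuous_const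
  have hIntF : ∀ (t : ℕ) (g : Set.Icc (0 : ℝ) K × Set.Icc (0 : ℝ) K → ℝ),
      Continuous g → Integrable g (ν t) := by
    intro t g hg
    haveI := hprob t
    exact hg.integrable_of_hasCompactSupport
      (IsCompact.of_isClosed_subset isCompact_univ isClosed_closure (Set.subset_univ _))
  -- the first marginal of ν 0 is σX0
  have hfst0 : (ν 0).fst = σX0 := by
    ext E hE
    rw [Measure.fst_apply hE, ← Set.prod_univ, hν0 E hE]
  -- integral against the first marginal
  have hmargint : ∀ μ : Measure (Set.Icc (0 : ℝ) K × Set.Icc (0 : ℝ) K),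
      ∫ q, (-(χ * b ↑q.1) - c ↑q.1) ∂μ = ∫ x, (-(χ * b ↑x) - c ↑x) ∂μ.fst := by
    intro μ
    rw [Measure.fst, integral_map measurable_fst.aemeasurable
      hψc.stronglyMeasurable.aestronglyMeasurable]
  have hA0 : (∫ q, (-(χ * b ↑q.1) - c ↑q.1) ∂ν 0) = p0 * (-(χ * b K) - c K) := by
    rw [hmargint, hfst0, hJ0]
  -- the first marginal of ν (t+1)
  have hmeas1 : Measurable fun q : Set.Icc (0 : ℝ) K × Set.Icc (0 : ℝ) K =>
      ENNReal.ofReal (p q.2) := (hpcont.comp continuous_snd).measurable.ennreal_ofReal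
  have hmeas2 : Measurable fun q : Set.Icc (0 : ℝ) K × Set.Icc (0 : ℝ) K =>
      ENNReal.ofReal (1 - p q.2) :=
    (continuous_const.sub (hpcont.comp continuous_snd)).measurable.ennreal_ofReal
  have hmargs : ∀ t : ℕ, (ν (t + 1)).fst =
      (∫⁻ q, ENNReal.ofReal (p q.2) ∂ν t) •
        Measure.dirac (⟨K, Set.right_mem_Icc.mpr hK.le⟩ : Set.Icc (0 : ℝ) K)
      + (∫⁻ q, ENNReal.ofReal (1 - p q.2) ∂ν t) •
        Measure.dirac (⟨0, Set.left_mem_Icc.mpr hK.le⟩ : Set.Icc (0 : ℝ) K) := by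
    intro t
    ext E hE
    rw [Measure.fst_apply hE, ← Set.prod_univ, hνsucc t E hE]
    simp only [hσX, Measure.coe_add, Measure.coe_smul, Pi.add_apply, Pi.smul_apply,
      smul_eq_mul]
    rw [lintegral_add_left (hmeas1.mul_const _),
      lintegral_mul_const _ hmeas1, lintegral_mul_const _ hmeas2]
  have hPlle : ∀ t : ℕ, (∫⁻ q, ENNReal.ofReal (p q.2) ∂ν t) ≤ 1 := by
    intro t
    haveI := hprob t
    calc (∫⁻ q, ENNReal.ofReal (p q.2) ∂ν t) ≤ ∫⁻ _, 1 ∂ν t :=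
          lintegral_mono fun q => ENNReal.ofReal_le_one.mpr (part1 q.2).2
      _ = 1 := by rw [lintegral_one, measure_univ]
  have hQlle : ∀ t : ℕ, (∫⁻ q, ENNReal.ofReal (1 - p q.2) ∂ν t) ≤ 1 := by
    intro t
    haveI := hprob t
    calc (∫⁻ q, ENNReal.ofReal (1 - p q.2) ∂ν t) ≤ ∫⁻ _, 1 ∂ν t :=
          lintegral_mono fun q =>
            ENNReal.ofReal_le_one.mpr (by linarith [(part1 q.2).1])
      _ = 1 := by rw [lintegral_one, measure_univ]
  have hPl : ∀ t : ℕ, (∫⁻ q, ENNReal.ofReal (p q.2) ∂ν t).toReal = ∫ q, p q.2 ∂ν t := by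
    intro t
    have h := integral_eq_lintegral_of_nonneg_ae (μ := ν t)
      (f := fun q : Set.Icc (0 : ℝ) K × Set.Icc (0 : ℝ) K => p q.2)
      (Filter.Eventually.of_forall fun q => (part1 q.2).1)
      (Continuous.aestronglyMeasurable (hpcont.comp continuous_snd))
    rw [h]
  have hAt : ∀ t : ℕ, (∫ q, (-(χ * b ↑q.1) - c ↑q.1) ∂ν (t + 1)) =
      -((χ * b K + c K) * ∫ q, p q.2 ∂ν t) := by
    intro t
    rw [hmargint, hmargs t, donation_two_point_integral _ hψc _ _ _ _
      (ne_top_of_le_ne_top ENNReal.one_ne_top (hPlle t))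
      (ne_top_of_le_ne_top ENNReal.one_ne_top (hQlle t)), hPl t]
    show _ * (-(χ * b K) - c K) + _ * (-(χ * b 0) - c 0) = _
    rw [hb0, hc0]; ring
  -- pointwise identity in the second coordinate
  have hpt : ∀ y : Set.Icc (0 : ℝ) K, lam * (b ↑y + χ * c ↑y) =
      lam ^ 2 * (χ * b K + c K) * p y - (1 + lam) * γ
        + (1 - lam ^ 2) * p0 * (χ * b K + c K) := by
    intro y
    rw [hpy y]
    field_simp
    ring
  -- notation for the series terms
  set u : ℕ → ℝ := fun t => ∫ q, (-(c ↑q.1) + lam * b ↑q.2) ∂ν t with hu_def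
  set v : ℕ → ℝ := fun t => ∫ q, (b ↑q.1 + lam * (-(c ↑q.2))) ∂ν t with hv_def
  set A : ℕ → ℝ := fun t => ∫ q, (-(χ * b ↑q.1) - c ↑q.1) ∂ν t with hA_def
  -- bounds
  have hunorm : ∀ t, |u t| ≤ c K + b K := by
    intro t
    haveI := hprob t
    have h := norm_integral_le_of_norm_le_const (μ := ν t) (C := c K + b K)
      (f := fun q : Set.Icc (0 : ℝ) K × Set.Icc (0 : ℝ) K => -(c ↑q.1) + lam * b ↑q.2)
      (Filter.Eventually.of_forall fun q => by
        obtain ⟨h1, h2, h3, h4⟩ := hbnd q.1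
        obtain ⟨h5, h6, h7, h8⟩ := hbnd q.2
        rw [Real.norm_eq_abs, abs_le]
        constructor <;>
          nlinarith [mul_nonneg hlam0.le h5, mul_le_of_le_one_left h5 hlam1.le])
    simpa only [Real.norm_eq_abs, probReal_univ, mul_one] using h
  have hvnorm : ∀ t, |v t| ≤ b K + c K := by
    intro t
    haveI := hprob t
    have h := norm_integral_le_of_norm_le_const (μ := ν t) (C := b K + c K)
      (f := fun q : Set.Icc (0 : ℝ) K × Set.Icc (0 : ℝ) K => b ↑q.1 + lam * (-(c ↑q.2)))
      (Filter.Eventually.of_forall fun q => by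
        obtain ⟨h1, h2, h3, h4⟩ := hbnd q.1
        obtain ⟨h5, h6, h7, h8⟩ := hbnd q.2
        rw [Real.norm_eq_abs, abs_le]
        constructor <;>
          nlinarith [mul_nonneg hlam0.le h7, mul_le_of_le_one_left h7 hlam1.le])
    simpa only [Real.norm_eq_abs, probReal_univ, mul_one] using h
  have hAnorm : ∀ t, |A t| ≤ χ * b K + c K := by
    intro t
    haveI := hprob t
    have h := norm_integral_le_of_norm_le_const (μ := ν t) (C := χ * b K + c K)
      (f := fun q : Set.Icc (0 : ℝ) K × Set.Icc (0 : ℝ) K => -(χ * b ↑q.1) - c ↑q.1)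
      (Filter.Eventually.of_forall fun q => by
        obtain ⟨h1, h2, h3, h4⟩ := hbnd q.1
        rw [Real.norm_eq_abs, abs_le]
        have hχ0 : (0:ℝ) ≤ χ := le_trans zero_le_one hχ
        constructor <;>
          nlinarith [mul_nonneg hχ0 h1, mul_le_mul_of_nonneg_left h2 hχ0])
    simpa only [Real.norm_eq_abs, probReal_univ, mul_one] using h
  -- summability
  have hgs : Summable fun t : ℕ => (lam ^ 2) ^ t :=
    summable_geometric_of_lt_one (by positivity) (by nlinarith)
  have hSum : ∀ (w : ℕ → ℝ) (C : ℝ), (∀ t, |w t| ≤ C) →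
      Summable fun t => lam ^ (2 * t) * w t := by
    intro w C hw
    apply Summable.of_norm
    apply Summable.of_nonneg_of_le (fun t => norm_nonneg _) _ (hgs.mul_left C)
    intro t
    rw [Real.norm_eq_abs, abs_mul, pow_mul, abs_pow, abs_of_nonneg (by positivity : (0:ℝ) ≤ lam ^ 2)]
    have : (0:ℝ) ≤ (lam ^ 2) ^ t := by positivity
    calc (lam ^ 2) ^ t * |w t| ≤ (lam ^ 2) ^ t * C := by
          exact mul_le_mul_of_nonneg_left (hw t) this
      _ = C * (lam ^ 2) ^ t := by ring
  have hsu : Summable fun t => lam ^ (2 * t) * u t := hSum u _ hunorm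
  have hsv : Summable fun t => lam ^ (2 * t) * v t := hSum v _ hvnorm
  have hsa : Summable fun t => lam ^ (2 * t) * A t := hSum A _ hAnorm
  -- the key combination
  have hcomb : ∀ t, u t - χ * v t =
      A t - lam ^ 2 * A (t + 1)
        + (-(1 + lam) * γ + (1 - lam ^ 2) * p0 * (χ * b K + c K)) := by
    intro t
    have hInt1 : Integrable (fun q : Set.Icc (0 : ℝ) K × Set.Icc (0 : ℝ) K =>
        -(c ↑q.1) + lam * b ↑q.2) (ν t) :=
      hIntF t _ ((hc'.comp continuous_fst).neg.add
        (continuous_const.mul (hb'.comp continuous_snd)))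
    have hInt2 : Integrable (fun q : Set.Icc (0 : ℝ) K × Set.Icc (0 : ℝ) K =>
        b ↑q.1 + lam * (-(c ↑q.2))) (ν t) :=
      hIntF t _ ((hb'.comp continuous_fst).add
        (continuous_const.mul (hc'.comp continuous_snd).neg))
    have hIntA : Integrable (fun q : Set.Icc (0 : ℝ) K × Set.Icc (0 : ℝ) K =>
        -(χ * b ↑q.1) - c ↑q.1) (ν t) :=
      hIntF t _ (((continuous_const.mul (hb'.comp continuous_fst)).neg).sub
        (hc'.comp continuous_fst))
    have hIntp : Integrable (fun q : Set.Icc (0 : ℝ) K × Set.Icc (0 : ℝ) K =>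
        p q.2) (ν t) := hIntF t _ (hpcont.comp continuous_snd)
    have step1 : u t - χ * v t = ∫ q, ((-(c ↑q.1) + lam * b ↑q.2)
        - χ * (b ↑q.1 + lam * (-(c ↑q.2)))) ∂ν t := by
      rw [hu_def, hv_def]
      rw [← integral_const_mul, ← integral_sub hInt1 (hInt2.const_mul χ)]
    have step2 : (fun q : Set.Icc (0 : ℝ) K × Set.Icc (0 : ℝ) K =>
        (-(c ↑q.1) + lam * b ↑q.2) - χ * (b ↑q.1 + lam * (-(c ↑q.2)))) =
        fun q => (-(χ * b ↑q.1) - c ↑q.1) +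
          (lam ^ 2 * (χ * b K + c K) * p q.2
            + (-(1 + lam) * γ + (1 - lam ^ 2) * p0 * (χ * b K + c K))) := by
      funext q
      have := hpt q.2
      linear_combination this
    rw [step1, step2]
    haveI := hprob t
    have hIntp1 : Integrable (fun q : Set.Icc (0 : ℝ) K × Set.Icc (0 : ℝ) K =>
        lam ^ 2 * (χ * b K + c K) * p q.2) (ν t) := hIntp.const_mul _
    have hIntp2 : Integrable (fun q : Set.Icc (0 : ℝ) K × Set.Icc (0 : ℝ) K =>
        lam ^ 2 * (χ * b K + c K) * p q.2
          + (-(1 + lam) * γ + (1 - lam ^ 2) * p0 * (χ * b K + c K))) (ν t) :=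
      hIntp1.add (integrable_const _)
    rw [integral_add hIntA hIntp2, integral_add hIntp1 (integrable_const _),
      integral_const_mul, integral_const]
    have hAt' := hAt t
    simp only [probReal_univ, smul_eq_mul, one_mul]
    rw [hA_def]
    linear_combination ((lam ^ 2 : ℝ)) * hAt'
  -- telescoping sum
  have hsa' : Summable fun t => lam ^ (2 * (t + 1)) * A (t + 1) :=
    (summable_nat_add_iff 1).mpr hsa
  have htel : ∑' t, (lam ^ (2 * t) * A t - lam ^ (2 * (t + 1)) * A (t + 1)) = A 0 := by
    rw [Summable.tsum_sub hsa hsa']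
    have := Summable.tsum_eq_zero_add hsa
    simp only [Nat.mul_zero, pow_zero, one_mul] at this ⊢
    linarith [this]
  -- geometric part
  have hgeo : ∑' t : ℕ, lam ^ (2 * t) *
      (-(1 + lam) * γ + (1 - lam ^ 2) * p0 * (χ * b K + c K)) =
      (-(1 + lam) * γ + (1 - lam ^ 2) * p0 * (χ * b K + c K)) * (1 - lam ^ 2)⁻¹ := by
    have h1 : ∀ t : ℕ, lam ^ (2 * t) = (lam ^ 2) ^ t := fun t => pow_mul lam 2 t
    simp_rw [h1]
    rw [tsum_mul_right, tsum_geometric_of_lt_one (by positivity) (by nlinarith)]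
    ring
  -- assemble the series identity
  have hmain : (∑' t, lam ^ (2 * t) * u t) - χ * (∑' t, lam ^ (2 * t) * v t)
      = -γ / (1 - lam) := by
    have h1 : (∑' t, lam ^ (2 * t) * u t) - χ * (∑' t, lam ^ (2 * t) * v t)
        = ∑' t, (lam ^ (2 * t) * u t - χ * (lam ^ (2 * t) * v t)) := by
      rw [Summable.tsum_sub hsu (hsv.mul_left χ), tsum_mul_left]
    have h2 : (fun t => lam ^ (2 * t) * u t - χ * (lam ^ (2 * t) * v t)) =
        fun t => (lam ^ (2 * t) * A t - lam ^ (2 * (t + 1)) * A (t + 1))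
          + lam ^ (2 * t) * (-(1 + lam) * γ + (1 - lam ^ 2) * p0 * (χ * b K + c K)) := by
      funext t
      have := hcomb t
      have hpow : lam ^ (2 * (t + 1)) = lam ^ (2 * t) * lam ^ 2 := by ring
      rw [hpow]
      linear_combination lam ^ (2 * t) * this
    have hsum1 : Summable fun t =>
        lam ^ (2 * t) * A t - lam ^ (2 * (t + 1)) * A (t + 1) := hsa.sub hsa'
    have hsum2 : Summable fun t => lam ^ (2 * t) *
        (-(1 + lam) * γ + (1 - lam ^ 2) * p0 * (χ * b K + c K)) :=
      hSum _ |(-(1 + lam) * γ + (1 - lam ^ 2) * p0 * (χ * b K + c K))|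
        (fun t => le_refl _)
    rw [h1, h2, Summable.tsum_add hsum1 hsum2, htel, hgeo]
    have hA0' : A 0 = p0 * (-(χ * b K) - c K) := hA0
    rw [hA0']
    field_simp
    ring
  -- conclude
  have hfinal : (1 - lam) * ((∑' t, lam ^ (2 * t) * u t)
      - χ * (∑' t, lam ^ (2 * t) * v t)) = -γ := by
    rw [hmain]
    field_simp
  linear_combination hfinal - hγ
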